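/- For n ≥ 1 and divisors d, e of n, the generalized Ramanujan sum C_n(d,e) := Σ_{v ∈ ℤ/nℤ, gcd(v,n)=e} ζ_n^{dv} equals Σ_{g | gcd(d, n/e)} μ((n/e)/g)·g. -/

import Mathlib

open Finset Complex

/-- `n`-th root of unity `ζ_n = exp(2πi/n)`. -/
noncomputable def zetaC (n : ℕ) : ℂ := Complex.exp (2 * Real.pi * Complex.I / n)

lemma zetaC_pow_eq (m e : ℕ) (hm : m ≠ 0) (he : e ≠ 0) :
    zetaC (e * m) ^ e = zetaC m := by
  unfold zetaC
  rw [← Complex.exp_nat_mul]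
  congr 1
  have hm' : (m : ℂ) ≠ 0 := Nat.cast_ne_zero.2 hm
  have he' : (e : ℂ) ≠ 0 := Nat.cast_ne_zero.2 he
  push_cast
  field_simp

lemma sum_full (m d : ℕ) [NeZero m] :
    ∑ v : ZMod m, zetaC m ^ (d * v.val) = if m ∣ d then (m : ℂ) else 0 := by
  have hm : m ≠ 0 := NeZero.ne m
  have hprim : IsPrimitiveRoot (zetaC m) m := Complex.isPrimitiveRoot_exp m hm
  have h1 : ∑ v : ZMod m, zetaC m ^ (d * v.val) = ∑ i ∈ Finset.range m, (zetaC m ^ d) ^ i := by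
    refine Finset.sum_bij' (fun (v : ZMod m) _ => v.val) (fun i _ => (i : ZMod m))
      (fun v _ => Finset.mem_range.2 (ZMod.val_lt v)) (fun i _ => Finset.mem_univ _)
      (fun v _ => ?_) (fun i hi => ?_) (fun v _ => ?_)
    · exact ZMod.natCast_zmod_val v
    · exact ZMod.val_cast_of_lt (Finset.mem_range.1 hi)
    · rw [pow_mul]
  rw [h1]
  by_cases hx : zetaC m ^ d = 1
  · rw [if_pos (hprim.pow_eq_one_iff_dvd d |>.1 hx)]
    simp [hx]
  · rw [if_neg (fun h => hx (hprim.pow_eq_one_iff_dvd d |>.2 h))]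
    rw [geom_sum_eq hx]
    have : (zetaC m ^ d) ^ m = 1 := by
      rw [← pow_mul, mul_comm, pow_mul, hprim.pow_eq_one, one_pow]
    rw [this]
    simp

lemma sum_multiples (k t d : ℕ) [NeZero k] [NeZero t] :
    ∑ v ∈ Finset.univ.filter (fun v : ZMod (k * t) => k ∣ v.val), zetaC (k * t) ^ (d * v.val)
      = if t ∣ d then (t : ℂ) else 0 := by
  have hk : k ≠ 0 := NeZero.ne k
  have ht : t ≠ 0 := NeZero.ne t
  rw [← sum_full t d]
  refine Finset.sum_bij' (fun (v : ZMod (k * t)) _ => ((v.val / k : ℕ) : ZMod t))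
    (fun (u : ZMod t) _ => ((k * u.val : ℕ) : ZMod (k * t)))
    (fun v _ => Finset.mem_univ _)
    (fun u _ => ?_) (fun v hv => ?_) (fun u _ => ?_) (fun v hv => ?_)
  · -- membership of k * u.val in filter
    simp only [Finset.mem_filter, Finset.mem_univ, true_and]
    rw [ZMod.val_cast_of_lt]
    · exact Dvd.intro _ rfl
    · exact (mul_lt_mul_iff_right₀ (Nat.pos_of_ne_zero hk)).2 (ZMod.val_lt u)
  · -- left inverse
    obtain ⟨c, hc⟩ := (Finset.mem_filter.1 hv).2
    have hclt : c < t := by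
      have := ZMod.val_lt v
      rw [hc] at this
      exact lt_of_mul_lt_mul_left this (Nat.zero_le k)
    rw [hc, Nat.mul_div_cancel_left c (Nat.pos_of_ne_zero hk),
      ZMod.val_cast_of_lt hclt, ← hc, ZMod.natCast_zmod_val]
  · -- right inverse
    rw [ZMod.val_cast_of_lt ((mul_lt_mul_iff_right₀ (Nat.pos_of_ne_zero hk)).2 (ZMod.val_lt u)),
      Nat.mul_div_cancel_left _ (Nat.pos_of_ne_zero hk), ZMod.natCast_zmod_val]
  · -- term equality
    obtain ⟨c, hc⟩ := (Finset.mem_filter.1 hv).2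
    have hclt : c < t := by
      have := ZMod.val_lt v
      rw [hc] at this
      exact lt_of_mul_lt_mul_left this (Nat.zero_le k)
    rw [hc, Nat.mul_div_cancel_left c (Nat.pos_of_ne_zero hk), ZMod.val_cast_of_lt hclt]
    rw [show d * (k * c) = k * (d * c) by ring, pow_mul]
    rw [show zetaC (k * t) ^ k = zetaC t from zetaC_pow_eq t k ht hk]

lemma sum_moebius_divisors (x : ℕ) :
    (∑ k ∈ x.divisors, (ArithmeticFunction.moebius k : ℂ)) = if x = 1 then 1 else 0 := by
  have h := congrArg (fun f : ArithmeticFunction ℤ => f x) ArithmeticFunction.moebius_mul_coe_zeta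
  simp only [ArithmeticFunction.coe_mul_zeta_apply, ArithmeticFunction.one_apply] at h
  have h2 : ((∑ k ∈ x.divisors, ArithmeticFunction.moebius k : ℤ) : ℂ)
      = ((if x = 1 then 1 else 0 : ℤ) : ℂ) := by rw [h]
  push_cast at h2
  exact h2

lemma divisors_gcd_eq (a m : ℕ) (hm : m ≠ 0) :
    (Nat.gcd a m).divisors = m.divisors.filter (· ∣ a) := by
  ext k
  simp only [Nat.mem_divisors, Finset.mem_filter]
  constructor
  · rintro ⟨hk, -⟩
    exact ⟨⟨hk.trans (Nat.gcd_dvd_right a m), hm⟩, hk.trans (Nat.gcd_dvd_left a m)⟩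
  · rintro ⟨⟨hkm, -⟩, hka⟩
    exact ⟨Nat.dvd_gcd hka hkm, Nat.gcd_ne_zero_right hm⟩

lemma ramanujan_sum (m d : ℕ) [NeZero m] :
    ∑ v ∈ Finset.univ.filter (fun v : ZMod m => Nat.gcd v.val m = 1), zetaC m ^ (d * v.val)
      = ∑ g ∈ (Nat.gcd d m).divisors, (ArithmeticFunction.moebius (m / g) : ℂ) * (g : ℂ) := by
  have hm : m ≠ 0 := NeZero.ne m
  have step1 : ∀ v : ZMod m,
      (if Nat.gcd v.val m = 1 then (1 : ℂ) else 0)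
        = ∑ k ∈ m.divisors, if k ∣ v.val then (ArithmeticFunction.moebius k : ℂ) else 0 := by
    intro v
    rw [← Finset.sum_filter, ← divisors_gcd_eq v.val m hm, sum_moebius_divisors]
  calc
    ∑ v ∈ Finset.univ.filter (fun v : ZMod m => Nat.gcd v.val m = 1), zetaC m ^ (d * v.val)
        = ∑ v : ZMod m, (if Nat.gcd v.val m = 1 then (1:ℂ) else 0) * zetaC m ^ (d * v.val) := by
          rw [Finset.sum_filter]
          exact Finset.sum_congr rfl fun v _ => by split <;> simp
    _ = ∑ v : ZMod m, ∑ k ∈ m.divisors,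
          (if k ∣ v.val then (ArithmeticFunction.moebius k : ℂ) else 0) * zetaC m ^ (d * v.val) := by
          refine Finset.sum_congr rfl fun v _ => ?_
          rw [step1 v, Finset.sum_mul]
    _ = ∑ k ∈ m.divisors, ∑ v : ZMod m,
          (if k ∣ v.val then (ArithmeticFunction.moebius k : ℂ) else 0) * zetaC m ^ (d * v.val) :=
          Finset.sum_comm
    _ = ∑ k ∈ m.divisors, (ArithmeticFunction.moebius k : ℂ) *
          ∑ v ∈ Finset.univ.filter (fun v : ZMod m => k ∣ v.val), zetaC m ^ (d * v.val) := by
          refine Finset.sum_congr rfl fun k _ => ?_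
          rw [Finset.mul_sum, Finset.sum_filter]
          exact Finset.sum_congr rfl fun v _ => by split <;> simp
    _ = ∑ k ∈ m.divisors, (ArithmeticFunction.moebius k : ℂ) *
          (if (m / k) ∣ d then ((m / k : ℕ) : ℂ) else 0) := by
          refine Finset.sum_congr rfl fun k hk => ?_
          obtain ⟨⟨t, ht⟩, -⟩ := Nat.mem_divisors.1 hk
          have hk0 : k ≠ 0 := by rintro rfl; exact hm (by simpa using ht)
          have ht0 : t ≠ 0 := by rintro rfl; exact hm (by simpa using ht)
          have htq : m / k = t := by rw [ht, Nat.mul_div_cancel_left t (Nat.pos_of_ne_zero hk0)]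
          haveI : NeZero k := ⟨hk0⟩
          haveI : NeZero t := ⟨ht0⟩
          subst ht
          rw [htq, sum_multiples k t d]
    _ = ∑ g ∈ m.divisors, (ArithmeticFunction.moebius (m / g) : ℂ) *
          (if g ∣ d then (g : ℂ) else 0) := by
          rw [← Nat.sum_div_divisors m
            (fun k => (ArithmeticFunction.moebius k : ℂ) * (if (m / k) ∣ d then ((m / k : ℕ) : ℂ) else 0))]
          refine Finset.sum_congr rfl fun g hg => ?_
          obtain ⟨hgm, -⟩ := Nat.mem_divisors.1 hg
          rw [Nat.div_div_self hgm hm]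
    _ = ∑ g ∈ (Nat.gcd d m).divisors, (ArithmeticFunction.moebius (m / g) : ℂ) * (g : ℂ) := by
          rw [divisors_gcd_eq d m hm, Finset.sum_filter]
          exact Finset.sum_congr rfl fun g _ => by split <;> simp

theorem stmt2 (n d e : ℕ) (hn : 1 ≤ n) [NeZero n] (hd : d ∣ n) (he : e ∣ n) :
    ∑ v ∈ Finset.univ.filter (fun v : ZMod n => Nat.gcd v.val n = e), zetaC n ^ (d * v.val) =
      ∑ g ∈ (Nat.gcd d (n / e)).divisors, (ArithmeticFunction.moebius ((n / e) / g) : ℂ) * (g : ℂ) := by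
  have hn0 : n ≠ 0 := NeZero.ne n
  have he0 : e ≠ 0 := by rintro rfl; exact hn0 (Nat.eq_zero_of_zero_dvd he)
  set m := n / e with hmdef
  have hem : e * m = n := Nat.mul_div_cancel' he
  have hm0 : m ≠ 0 := by rintro h; rw [h, mul_zero] at hem; exact hn0 hem.symm
  haveI : NeZero m := ⟨hm0⟩
  rw [← ramanujan_sum m d]
  refine Finset.sum_bij' (fun (v : ZMod n) _ => ((v.val / e : ℕ) : ZMod m))
    (fun (w : ZMod m) _ => ((e * w.val : ℕ) : ZMod n))
    (fun v hv => ?_) (fun w hw => ?_) (fun v hv => ?_) (fun w hw => ?_) (fun v hv => ?_)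
  · -- forward membership
    have hg := (Finset.mem_filter.1 hv).2
    have hev : e ∣ v.val := hg ▸ Nat.gcd_dvd_left v.val n
    obtain ⟨c, hc⟩ := hev
    have hclt : c < m := by
      have := ZMod.val_lt v
      rw [hc, ← hem] at this
      exact lt_of_mul_lt_mul_left this (Nat.zero_le e)
    simp only [Finset.mem_filter, Finset.mem_univ, true_and]
    rw [hc, Nat.mul_div_cancel_left c (Nat.pos_of_ne_zero he0), ZMod.val_cast_of_lt hclt]
    have h2 : e * Nat.gcd c m = e * 1 := by
      rw [← Nat.gcd_mul_left, ← hc, hem, hg, mul_one]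
    exact Nat.eq_of_mul_eq_mul_left (Nat.pos_of_ne_zero he0) h2
  · -- backward membership
    have hg := (Finset.mem_filter.1 hw).2
    simp only [Finset.mem_filter, Finset.mem_univ, true_and]
    have hlt : e * w.val < n := by
      rw [← hem]
      exact (mul_lt_mul_iff_right₀ (Nat.pos_of_ne_zero he0)).2 (ZMod.val_lt w)
    rw [ZMod.val_cast_of_lt hlt, ← hem, Nat.gcd_mul_left, hg, mul_one]
  · -- left inverse
    have hg := (Finset.mem_filter.1 hv).2
    have hev : e ∣ v.val := hg ▸ Nat.gcd_dvd_left v.val n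
    obtain ⟨c, hc⟩ := hev
    have hclt : c < m := by
      have := ZMod.val_lt v
      rw [hc, ← hem] at this
      exact lt_of_mul_lt_mul_left this (Nat.zero_le e)
    rw [hc, Nat.mul_div_cancel_left c (Nat.pos_of_ne_zero he0),
      ZMod.val_cast_of_lt hclt, ← hc, ZMod.natCast_zmod_val]
  · -- right inverse
    have hlt : e * w.val < n := by
      rw [← hem]
      exact (mul_lt_mul_iff_right₀ (Nat.pos_of_ne_zero he0)).2 (ZMod.val_lt w)
    rw [ZMod.val_cast_of_lt hlt, Nat.mul_div_cancel_left _ (Nat.pos_of_ne_zero he0),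
      ZMod.natCast_zmod_val]
  · -- term equality
    have hg := (Finset.mem_filter.1 hv).2
    have hev : e ∣ v.val := hg ▸ Nat.gcd_dvd_left v.val n
    obtain ⟨c, hc⟩ := hev
    have hclt : c < m := by
      have := ZMod.val_lt v
      rw [hc, ← hem] at this
      exact lt_of_mul_lt_mul_left this (Nat.zero_le e)
    rw [hc, Nat.mul_div_cancel_left c (Nat.pos_of_ne_zero he0), ZMod.val_cast_of_lt hclt]
    rw [show d * (e * c) = e * (d * c) by ring, pow_mul]
    rw [show zetaC n ^ e = zetaC m by rw [← hem]; exact zetaC_pow_eq m e hm0 he0]
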